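/- Let s : J → R be time-dependent scores on a finite set with softmax weights p_j = e^{βs_j}/Z. If the scores take exactly two values — the self-score s_i = λ with ṡ_i = 0, and cross-scores s_j = λγ with common ṡ_j = λγ̇ > 0 for j ≠ i, where γ ∈ (0,1), λ > 0, γ̇ > 0 — then the entropy H = -Σ_j p_j log p_j satisfies dH/dt = β² p_i(1-p_i) λ²(1-γ)γ̇ > 0; in particular entropy is strictly increasing. -/

import Mathlib

lemma sum_ite_fin_aux {n : ℕ} (i : Fin n) (a b : ℝ) :
    ∑ k : Fin n, (if k = i then a else b) = a + ((n : ℝ) - 1) * b := by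
  have h : ∀ k : Fin n, (if k = i then a else b) = b + (if k = i then a - b else 0) := by
    intro k; split <;> ring
  rw [Finset.sum_congr rfl (fun k _ => h k), Finset.sum_add_distrib, Finset.sum_const,
    Finset.sum_ite_eq' Finset.univ i (fun _ => a - b)]
  simp [Finset.card_univ]
  ring

/-- Entropy strictly increases for a scalar-head equiangular attention flow:
with self-score `λ` (velocity `0`) and cross-scores `λγ(t)` (common velocity
`λγ̇ > 0`), the softmax entropy satisfies
`dH/dt = β² p_i (1-p_i) λ² (1-γ) γ̇ > 0`. -/
theorem entropy_strictly_increasing_equiangular (n : ℕ) (hn : 2 ≤ n)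
    (β lam : ℝ) (hβ : 0 < β) (hlam : 0 < lam)
    (γ : ℝ → ℝ) (γ' : ℝ) (t : ℝ) (hγ : HasDerivAt γ γ' t)
    (hγt : γ t ∈ Set.Ioo (0 : ℝ) 1) (hγ' : 0 < γ')
    (i : Fin n)
    (s : ℝ → Fin n → ℝ)
    (hscore : ∀ τ j, s τ j = if j = i then lam else lam * γ τ)
    (p : ℝ → Fin n → ℝ)
    (hp : ∀ τ j, p τ j = Real.exp (β * s τ j) / ∑ k : Fin n, Real.exp (β * s τ k)) :
    HasDerivAt (fun τ => -∑ j : Fin n, p τ j * Real.log (p τ j))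
      (β ^ 2 * p t i * (1 - p t i) * lam ^ 2 * (1 - γ t) * γ') t ∧
    0 < β ^ 2 * p t i * (1 - p t i) * lam ^ 2 * (1 - γ t) * γ' := by
  obtain ⟨hγ0, hγ1⟩ := hγt
  have hm0 : (0 : ℝ) < (n : ℝ) - 1 := by
    have : (2 : ℝ) ≤ (n : ℝ) := by exact_mod_cast hn
    linarith
  set m : ℝ := (n : ℝ) - 1 with hmdef
  set A : ℝ := Real.exp (β * lam) with hAdef
  have hA0 : 0 < A := Real.exp_pos _
  set Ef : ℝ → ℝ := fun τ => Real.exp (β * (lam * γ τ)) with hEdef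
  have hE0 : ∀ τ, 0 < Ef τ := fun τ => Real.exp_pos _
  have hZ0 : ∀ τ, 0 < A + m * Ef τ := fun τ => by
    have := hE0 τ; have := mul_pos hm0 this; linarith
  -- partition function
  have hsum : ∀ τ, ∑ k : Fin n, Real.exp (β * s τ k) = A + m * Ef τ := by
    intro τ
    have h : ∀ k : Fin n, Real.exp (β * s τ k) = if k = i then A else Ef τ := by
      intro k; rw [hscore]; split <;> rfl
    rw [Finset.sum_congr rfl (fun k _ => h k), sum_ite_fin_aux]
  have hpi : ∀ τ, p τ i = A / (A + m * Ef τ) := by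
    intro τ; rw [hp, hsum, hscore]; simp; rfl
  have hpj : ∀ τ, ∀ j : Fin n, j ≠ i → p τ j = Ef τ / (A + m * Ef τ) := by
    intro τ j hj; rw [hp, hsum, hscore]; simp [hj]; rfl
  -- rewrite the entropy
  have hent : (fun τ => -∑ j : Fin n, p τ j * Real.log (p τ j))
      = fun τ => Real.log (A + m * Ef τ)
          - β * lam * (A + m * (γ τ * Ef τ)) / (A + m * Ef τ) := by
    funext τ
    have hZ := hZ0 τ
    have hE := hE0 τ
    have h1 : ∀ j : Fin n, p τ j * Real.log (p τ j)
        = if j = i then (A / (A + m * Ef τ)) * Real.log (A / (A + m * Ef τ))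
          else (Ef τ / (A + m * Ef τ)) * Real.log (Ef τ / (A + m * Ef τ)) := by
      intro j
      by_cases hj : j = i
      · subst hj; rw [hpi]; simp
      · rw [hpj τ j hj]; simp [hj]
    rw [Finset.sum_congr rfl (fun j _ => h1 j), sum_ite_fin_aux]
    rw [Real.log_div hA0.ne' hZ.ne', Real.log_div hE.ne' hZ.ne',
      hAdef, Real.log_exp, hEdef, Real.log_exp]
    field_simp
    ring
  rw [hent, hpi t]
  have hZt := hZ0 t
  -- derivatives
  have hinner : HasDerivAt (fun τ => β * (lam * γ τ)) (β * (lam * γ')) t :=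
    (hγ.const_mul lam).const_mul β
  have hE' : HasDerivAt Ef (Ef t * (β * (lam * γ'))) t := hinner.exp
  have hZ' : HasDerivAt (fun τ => A + m * Ef τ) (m * (Ef t * (β * (lam * γ')))) t :=
    ((hE'.const_mul m)).const_add A
  have hlog : HasDerivAt (fun τ => Real.log (A + m * Ef τ))
      (m * (Ef t * (β * (lam * γ'))) / (A + m * Ef t)) t := hZ'.log hZt.ne'
  have hN : HasDerivAt (fun τ => β * lam * (A + m * (γ τ * Ef τ)))
      (β * lam * (m * (γ' * Ef t + γ t * (Ef t * (β * (lam * γ')))))) t :=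
    (((hγ.mul hE').const_mul m).const_add A).const_mul (β * lam)
  have hQ : HasDerivAt (fun τ => β * lam * (A + m * (γ τ * Ef τ)) / (A + m * Ef τ))
      ((β * lam * (m * (γ' * Ef t + γ t * (Ef t * (β * (lam * γ'))))) * (A + m * Ef t)
        - β * lam * (A + m * (γ t * Ef t)) * (m * (Ef t * (β * (lam * γ')))))
        / (A + m * Ef t) ^ 2) t := hN.div hZ' hZt.ne'
  have hφ := hlog.sub hQ
  constructor
  · refine hφ.congr_deriv ?_
    field_simp
    ring
  · have h1 : 0 < 1 - A / (A + m * Ef t) := by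
      rw [sub_pos, div_lt_one hZt]
      have := mul_pos hm0 (hE0 t); linarith
    have hpA : 0 < A / (A + m * Ef t) := div_pos hA0 hZt
    have h2 : (0 : ℝ) < 1 - γ t := by linarith
    exact mul_pos (mul_pos (mul_pos (mul_pos (mul_pos (pow_pos hβ 2) hpA) h1)
      (pow_pos hlam 2)) h2) hγ'
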